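/- For every complex Lie algebra 𝔤 and every (e₁,e₂) ∈ ℂ², the bracket defined on Ḡ^(e₁,e₂) = 𝔤 ⊗ A^(e₁,e₂) by the structure equations of the genus-one current algebra family is antisymmetric and satisfies the Jacobi identity, i.e. Ḡ^(e₁,e₂) is a Lie algebra over ℂ. -/

import Mathlib

open scoped Classical

/-- The bracket of the genus-one current algebra family
`Ḡ^(e₁,e₂) = 𝔤 ⊗ A^(e₁,e₂)`, where the tensor product of `𝔤` with the
ℂ-vector space with basis `{Aₙ}_{n∈ℤ}` is modeled as `ℤ →₀ 𝔤`, the pure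
tensor `x ⊗ Aₙ` corresponding to `Finsupp.single n x`.  The bracket is the
bilinear extension of:
`[x ⊗ Aₙ, y ⊗ Aₘ] = [x,y] ⊗ Aₙ₊ₘ` if `n` or `m` is even, and
`[x ⊗ Aₙ, y ⊗ Aₘ] = [x,y] ⊗ (Aₙ₊ₘ + 3e₁Aₙ₊ₘ₋₂ + (e₁−e₂)(2e₁+e₂)Aₙ₊ₘ₋₄)`
if both `n` and `m` are odd. -/
noncomputable def Gbr (𝔤 : Type*) [LieRing 𝔤] [LieAlgebra ℂ 𝔤]
    (e₁ e₂ : ℂ) (f g : ℤ →₀ 𝔤) : ℤ →₀ 𝔤 :=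
  f.sum fun n x => g.sum fun m y =>
    if Odd n ∧ Odd m then
      Finsupp.single (n + m) ⁅x, y⁆ + (3 * e₁) • Finsupp.single (n + m - 2) ⁅x, y⁆
        + ((e₁ - e₂) * (2 * e₁ + e₂)) • Finsupp.single (n + m - 4) ⁅x, y⁆
    else Finsupp.single (n + m) ⁅x, y⁆

variable {𝔤 : Type*} [LieRing 𝔤] [LieAlgebra ℂ 𝔤]

/-- single + scaled singles pattern -/
noncomputable def Tpat (e₁ e₂ : ℂ) (n m : ℤ) (z : 𝔤) : ℤ →₀ 𝔤 :=
  if Odd n ∧ Odd m then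
    Finsupp.single (n + m) z + (3 * e₁) • Finsupp.single (n + m - 2) z
      + ((e₁ - e₂) * (2 * e₁ + e₂)) • Finsupp.single (n + m - 4) z
  else Finsupp.single (n + m) z

lemma Tpat_zero (e₁ e₂ : ℂ) (n m : ℤ) : Tpat e₁ e₂ n m (0 : 𝔤) = 0 := by
  unfold Tpat; split <;> simp

lemma Tpat_add (e₁ e₂ : ℂ) (n m : ℤ) (z w : 𝔤) :
    Tpat e₁ e₂ n m (z + w) = Tpat e₁ e₂ n m z + Tpat e₁ e₂ n m w := by
  unfold Tpat; split <;> simp [Finsupp.single_add, smul_add] <;> abel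

lemma Tpat_smul (e₁ e₂ : ℂ) (n m : ℤ) (c : ℂ) (z : 𝔤) :
    Tpat e₁ e₂ n m (c • z) = c • Tpat e₁ e₂ n m z := by
  unfold Tpat; split <;> simp [Finsupp.smul_single, smul_add, smul_comm c]

lemma Tpat_neg (e₁ e₂ : ℂ) (n m : ℤ) (z : 𝔤) :
    Tpat e₁ e₂ n m (-z) = - Tpat e₁ e₂ n m z := by
  unfold Tpat; split <;> simp <;> abel

lemma Tpat_comm (e₁ e₂ : ℂ) (n m : ℤ) (z : 𝔤) :
    Tpat e₁ e₂ n m z = Tpat e₁ e₂ m n z := by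
  unfold Tpat
  rw [add_comm n m]
  exact if_congr and_comm rfl rfl

lemma Gbr_eq (e₁ e₂ : ℂ) (f g : ℤ →₀ 𝔤) :
    Gbr 𝔤 e₁ e₂ f g = f.sum fun n x => g.sum fun m y => Tpat e₁ e₂ n m ⁅x, y⁆ := rfl

lemma Gbr_single_single (e₁ e₂ : ℂ) (n m : ℤ) (x y : 𝔤) :
    Gbr 𝔤 e₁ e₂ (Finsupp.single n x) (Finsupp.single m y) = Tpat e₁ e₂ n m ⁅x, y⁆ := by
  rw [Gbr_eq, Finsupp.sum_single_index, Finsupp.sum_single_index]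
  · simp [Tpat_zero]
  · simp [Tpat_zero]

lemma Gbr_zero_left (e₁ e₂ : ℂ) (g : ℤ →₀ 𝔤) : Gbr 𝔤 e₁ e₂ 0 g = 0 := by
  rw [Gbr_eq]; simp

lemma Gbr_zero_right (e₁ e₂ : ℂ) (f : ℤ →₀ 𝔤) : Gbr 𝔤 e₁ e₂ f 0 = 0 := by
  rw [Gbr_eq]; simp

lemma Gbr_add_left (e₁ e₂ : ℂ) (f f' g : ℤ →₀ 𝔤) :
    Gbr 𝔤 e₁ e₂ (f + f') g = Gbr 𝔤 e₁ e₂ f g + Gbr 𝔤 e₁ e₂ f' g := by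
  simp only [Gbr_eq]
  rw [Finsupp.sum_add_index]
  · intro n _; simp [Tpat_zero]
  · intro n _ x x'; rw [← Finsupp.sum_add]
    congr 1; ext m y; rw [add_lie, Tpat_add]

lemma Gbr_add_right (e₁ e₂ : ℂ) (f g g' : ℤ →₀ 𝔤) :
    Gbr 𝔤 e₁ e₂ f (g + g') = Gbr 𝔤 e₁ e₂ f g + Gbr 𝔤 e₁ e₂ f g' := by
  simp only [Gbr_eq]
  rw [← Finsupp.sum_add]
  congr 1; ext n x
  rw [Finsupp.sum_add_index]
  · intro m _; simp [Tpat_zero]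
  · intro m _ y y'; rw [lie_add, Tpat_add]

lemma Gbr_smul_left (e₁ e₂ : ℂ) (c : ℂ) (f g : ℤ →₀ 𝔤) :
    Gbr 𝔤 e₁ e₂ (c • f) g = c • Gbr 𝔤 e₁ e₂ f g := by
  simp only [Gbr_eq]
  rw [Finsupp.sum_smul_index', Finsupp.smul_sum]
  · refine Finsupp.sum_congr fun n _ => ?_
    rw [Finsupp.smul_sum]
    refine Finsupp.sum_congr fun m _ => ?_
    rw [smul_lie, Tpat_smul]
  · intro n; simp [Tpat_zero]

noncomputable def Fpat (e₁ e₂ : ℂ) (s : ℤ) (z : 𝔤) : ℤ →₀ 𝔤 :=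
  Finsupp.single s z + (3 * e₁) • Finsupp.single (s - 2) z
    + ((e₁ - e₂) * (2 * e₁ + e₂)) • Finsupp.single (s - 4) z

lemma Fpat_zero (e₁ e₂ : ℂ) (s : ℤ) : Fpat e₁ e₂ s (0 : 𝔤) = 0 := by
  simp [Fpat]

lemma Fpat_add (e₁ e₂ : ℂ) (s : ℤ) (z w : 𝔤) :
    Fpat e₁ e₂ s z + Fpat e₁ e₂ s w = Fpat e₁ e₂ s (z + w) := by
  simp only [Fpat, Finsupp.single_add, smul_add]; abel

lemma Tpat_eq (e₁ e₂ : ℂ) (n m : ℤ) (z : 𝔤) :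
    Tpat e₁ e₂ n m z =
      if Odd n ∧ Odd m then Fpat e₁ e₂ (n + m) z else Finsupp.single (n + m) z := rfl

lemma cyclic_jacobi (x y z : 𝔤) : ⁅⁅x, y⁆, z⁆ + ⁅⁅y, z⁆, x⁆ + ⁅⁅z, x⁆, y⁆ = 0 := by
  have h := lie_jacobi z x y
  have h1 : ⁅z, ⁅x, y⁆⁆ = -⁅⁅x, y⁆, z⁆ := by rw [← lie_skew]
  have h2 : ⁅x, ⁅y, z⁆⁆ = -⁅⁅y, z⁆, x⁆ := by rw [← lie_skew]
  have h3 : ⁅y, ⁅z, x⁆⁆ = -⁅⁅z, x⁆, y⁆ := by rw [← lie_skew]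
  rw [h1, h2, h3] at h
  linear_combination (norm := abel) -h

lemma Gbr_Tpat_single (e₁ e₂ : ℂ) (n m p : ℤ) (w z : 𝔤) :
    Gbr 𝔤 e₁ e₂ (Tpat e₁ e₂ n m w) (Finsupp.single p z) =
      if (Odd n ∧ Odd m) ∨ (Odd m ∧ Odd p) ∨ (Odd n ∧ Odd p)
      then Fpat e₁ e₂ (n + m + p) ⁅w, z⁆ else Finsupp.single (n + m + p) ⁅w, z⁆ := by
  rw [Tpat_eq]
  by_cases h : Odd n ∧ Odd m
  · rw [if_pos h, if_pos (Or.inl h)]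
    have he : ¬ Odd (n + m) := by
      rcases h with ⟨h1, h2⟩
      simp [Int.odd_add, ← Int.not_odd_iff_even, h1, h2]
    have he2 : ¬ Odd (n + m - 2) := by
      intro hc
      exact he (by simpa using hc.add_even (by decide : Even (2 : ℤ)))
    have he4 : ¬ Odd (n + m - 4) := by
      intro hc
      exact he (by simpa using hc.add_even (by decide : Even (4 : ℤ)))
    rw [Fpat, Gbr_add_left, Gbr_add_left, Gbr_smul_left, Gbr_smul_left,
        Gbr_single_single, Gbr_single_single, Gbr_single_single,
        Tpat_eq, Tpat_eq, Tpat_eq,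
        if_neg (fun hc => he hc.1), if_neg (fun hc => he2 hc.1), if_neg (fun hc => he4 hc.1)]
    have e2 : n + m - 2 + p = n + m + p - 2 := by ring
    have e4 : n + m - 4 + p = n + m + p - 4 := by ring
    rw [e2, e4, Fpat]
  · rw [if_neg h, Gbr_single_single, Tpat_eq]
    refine if_congr ?_ rfl rfl
    have hnm : Odd (n + m) ↔ (Odd n ↔ ¬ Odd m) := by
      rw [Int.odd_add, ← Int.not_odd_iff_even]
    constructor
    · rintro ⟨h1, h2⟩
      rw [hnm] at h1
      by_cases hn : Odd n
      · exact Or.inr (Or.inr ⟨hn, h2⟩)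
      · exact Or.inr (Or.inl ⟨(by tauto : Odd m), h2⟩)
    · rintro (hc | ⟨h1, h2⟩ | ⟨h1, h2⟩)
      · exact absurd hc h
      · exact ⟨hnm.mpr (by tauto), h2⟩
      · exact ⟨hnm.mpr (by tauto), h2⟩

lemma jacobi_single (e₁ e₂ : ℂ) (n m p : ℤ) (x y z : 𝔤) :
    Gbr 𝔤 e₁ e₂ (Gbr 𝔤 e₁ e₂ (Finsupp.single n x) (Finsupp.single m y)) (Finsupp.single p z)
      + Gbr 𝔤 e₁ e₂ (Gbr 𝔤 e₁ e₂ (Finsupp.single m y) (Finsupp.single p z)) (Finsupp.single n x)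
      + Gbr 𝔤 e₁ e₂ (Gbr 𝔤 e₁ e₂ (Finsupp.single p z) (Finsupp.single n x)) (Finsupp.single m y)
      = 0 := by
  rw [Gbr_single_single, Gbr_single_single, Gbr_single_single,
      Gbr_Tpat_single, Gbr_Tpat_single, Gbr_Tpat_single]
  have hc1 : ((Odd m ∧ Odd p) ∨ (Odd p ∧ Odd n) ∨ (Odd m ∧ Odd n))
      ↔ ((Odd n ∧ Odd m) ∨ (Odd m ∧ Odd p) ∨ (Odd n ∧ Odd p)) := by tauto
  have hc2 : ((Odd p ∧ Odd n) ∨ (Odd n ∧ Odd m) ∨ (Odd p ∧ Odd m))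
      ↔ ((Odd n ∧ Odd m) ∨ (Odd m ∧ Odd p) ∨ (Odd n ∧ Odd p)) := by tauto
  have hs1 : m + p + n = n + m + p := by ring
  have hs2 : p + n + m = n + m + p := by ring
  rw [if_congr hc1 (by rw [hs1]) (by rw [hs1]), if_congr hc2 (by rw [hs2]) (by rw [hs2])]
  split
  · rw [Fpat_add, Fpat_add, cyclic_jacobi, Fpat_zero]
  · rw [← Finsupp.single_add, ← Finsupp.single_add, cyclic_jacobi, Finsupp.single_zero]

lemma add_helper {M : Type*} [AddCommGroup M] {a b c a' b' c' : M}
    (h1 : a + b + c = 0) (h2 : a' + b' + c' = 0) :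
    (a + a') + (b + b') + (c + c') = 0 := by
  have h : (a + a') + (b + b') + (c + c') = (a + b + c) + (a' + b' + c') := by abel
  rw [h, h1, h2, add_zero]


/-- For every complex Lie algebra `𝔤` and every
`(e₁,e₂) ∈ ℂ²`, the bracket defined on `Ḡ^(e₁,e₂) = 𝔤 ⊗ A^(e₁,e₂)` by the
structure equations of the genus-one current algebra family is antisymmetric
and satisfies the Jacobi identity, i.e. `Ḡ^(e₁,e₂)` is a Lie algebra over ℂ. -/
theorem Gbr_antisymm_and_jacobi (𝔤 : Type) [LieRing 𝔤] [LieAlgebra ℂ 𝔤]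
    (e₁ e₂ : ℂ) :
    (∀ f g : ℤ →₀ 𝔤, Gbr 𝔤 e₁ e₂ f g = - Gbr 𝔤 e₁ e₂ g f) ∧
    (∀ f g h : ℤ →₀ 𝔤,
      Gbr 𝔤 e₁ e₂ (Gbr 𝔤 e₁ e₂ f g) h + Gbr 𝔤 e₁ e₂ (Gbr 𝔤 e₁ e₂ g h) f
        + Gbr 𝔤 e₁ e₂ (Gbr 𝔤 e₁ e₂ h f) g = 0) := by
  constructor
  · intro f g
    induction f using Finsupp.induction_linear with
    | zero => rw [Gbr_zero_left, Gbr_zero_right, neg_zero]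
    | add f f' hf hf' =>
      rw [Gbr_add_left, Gbr_add_right, hf, hf']; abel
    | single n x =>
      induction g using Finsupp.induction_linear with
      | zero => rw [Gbr_zero_left, Gbr_zero_right, neg_zero]
      | add g g' hg hg' =>
        rw [Gbr_add_left, Gbr_add_right, hg, hg']; abel
      | single m y =>
        rw [Gbr_single_single, Gbr_single_single, ← lie_skew y x, Tpat_neg, Tpat_comm, neg_neg]
  · intro f g h
    induction f using Finsupp.induction_linear with
    | zero => simp [Gbr_zero_left, Gbr_zero_right]
    | add f f' hf hf' =>
      simp only [Gbr_add_left, Gbr_add_right]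
      linear_combination (norm := abel) hf + hf'
    | single n x =>
      induction g using Finsupp.induction_linear with
      | zero => simp [Gbr_zero_left, Gbr_zero_right]
      | add g g' hg hg' =>
        simp only [Gbr_add_left, Gbr_add_right]
        linear_combination (norm := abel) hg + hg'
      | single m y =>
        induction h using Finsupp.induction_linear with
        | zero => simp [Gbr_zero_left, Gbr_zero_right]
        | add h h' hh hh' =>
          simp only [Gbr_add_left, Gbr_add_right]
          linear_combination (norm := abel) hh + hh'
        | single p z => exact jacobi_single e₁ e₂ n m p x y z
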